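/- arXiv:2205.05183 — 2 statements merged into one kernel-verified Lean document; each statement's English description precedes it below -/
import Mathlib

section
/- Let K, p, T be positive integers with q^{K(Tp+1)} · ∏_{t=1}^{T} q^{(t-1)Kp²} ≥ q^{K²}. Then T ≥ 1/2 - 1/p + sqrt(1/4 - 1/p - 1/p² + 2K/p²). In particular T ≥ √(2K)/p - O(1). -/
open Finset

lemma sum_aux (T c : ℕ) : ∑ t ∈ Icc 1 T, (t - 1) * c = (∑ i ∈ range T, i) * c := by
  induction T with
  | zero => simp
  | succ n ih =>
    rw [Finset.sum_Icc_succ_top (by omega), ih, Finset.sum_range_succ]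
    simp [Nat.add_sub_cancel, add_mul]

/-- If `q^{K(Tp+1)} · ∏_{t=1}^T q^{(t-1)Kp²} ≥ q^{K²}` (with `q ≥ 2` and
`K, p, T` positive), then `T ≥ 1/2 - 1/p + √(1/4 - 1/p - 1/p² + 2K/p²)`,
which is `√(2K)/p - O(1)`. -/
theorem stmt2 (q K p T : ℕ) (hq : 2 ≤ q) (hK : 0 < K) (hp : 0 < p) (hT : 0 < T)
    (h : q ^ (K * (T * p + 1)) * ∏ t ∈ Icc 1 T, q ^ ((t - 1) * K * p ^ 2)
        ≥ q ^ (K ^ 2)) :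
    (T : ℝ) ≥ 1 / 2 - 1 / p +
      Real.sqrt (1 / 4 - 1 / p - 1 / (p : ℝ) ^ 2 + 2 * K / (p : ℝ) ^ 2) := by

  have hq1 : 1 < q := hq
  have hsum : K ^ 2 ≤ K * (T * p + 1) + ∑ t ∈ Icc 1 T, (t - 1) * K * p ^ 2 := by
    rw [Finset.prod_pow_eq_pow_sum, ← pow_add] at h
    exact (pow_le_pow_iff_right₀ hq1).mp h
  have hs1 : ∑ t ∈ Icc 1 T, (t - 1) * K * p ^ 2
      = (∑ i ∈ range T, i) * (K * p ^ 2) := by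
    simpa [mul_assoc] using sum_aux T (K * p ^ 2)
  have hg : (∑ i ∈ range T, i) * 2 = T * (T - 1) := Finset.sum_range_id_mul_two T
  -- nat inequality multiplied by 2
  have hn : 2 * K ^ 2 ≤ 2 * (K * (T * p + 1)) + T * (T - 1) * (K * p ^ 2) := by
    rw [← hg]
    nlinarith [hsum, hs1]
  -- cast to reals
  have hp' : (1:ℝ) ≤ p := by exact_mod_cast hp
  have hT' : (1:ℝ) ≤ T := by exact_mod_cast hT
  have hK' : (1:ℝ) ≤ K := by exact_mod_cast hK
  have hR : 2 * (K:ℝ) ^ 2 ≤ 2 * (K * (T * p + 1)) + T * (T - 1) * (K * p ^ 2) := by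
    have := (Nat.cast_le (α := ℝ)).mpr hn
    push_cast [Nat.cast_sub hT] at this
    convert this using 2 <;> ring
  have hR2 : 2 * (K:ℝ) ≤ 2 * (T * p + 1) + T * (T - 1) * p ^ 2 := by
    have hKpos : (0:ℝ) < K := by linarith
    nlinarith [hR, hKpos]
  have hppos : (0:ℝ) < p := by linarith
  set m : ℝ := 1 / 2 - 1 / p with hm
  set D : ℝ := 1 / 4 - 1 / p - 1 / (p:ℝ) ^ 2 + 2 * K / (p:ℝ) ^ 2 with hD
  have hp2 : (0:ℝ) < (p:ℝ)^2 := by positivity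
  have e : (((T:ℝ) - m) ^ 2 - D) * (p:ℝ) ^ 2
      = (p:ℝ)^2 * T^2 - (p:ℝ)^2 * T + 2 * p * T + 2 - 2 * K := by
    rw [hm, hD]; field_simp; ring
  have hsq : D ≤ ((T:ℝ) - m) ^ 2 := by nlinarith [e, hR2, hp2]
  have hmle : m ≤ (T:ℝ) := by
    have : (0:ℝ) < 1 / p := by positivity
    rw [hm]; linarith
  have : Real.sqrt D ≤ (T:ℝ) - m := by
    calc Real.sqrt D ≤ Real.sqrt (((T:ℝ) - m) ^ 2) := Real.sqrt_le_sqrt hsq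
    _ = |(T:ℝ) - m| := Real.sqrt_sq_eq_abs _
    _ = (T:ℝ) - m := abs_of_nonneg (by linarith)
  linarith
end

section
/- In the radix-(p+1) FFT recursion, if Q(k,t) = f_{k_{H−1}⋯k_t}(γ_{k_{t−1}⋯k_0}) then Q(k,t+1) = ∑_{ρ=0}^{p} (γ_{k_t⋯k_0})^ρ · Q(k_ρ^{(t)}, t), where k_ρ^{(t)} has the same (p+1)-ary digits as k except digit t is replaced by ρ. -/
open Finset Polynomial

/-- The radix-`(p+1)` coefficient split: child `ρ` of a node polynomial `g`,
`f_{wρ}(z) = ∑_{d ≡ ρ mod (p+1)} b_d z^{(d-ρ)/(p+1)}` where `b_d` are the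
coefficients of `g = f_w`. -/
noncomputable def splitChild {F : Type*} [Field F] (p ρ : ℕ) (g : Polynomial F) :
    Polynomial F :=
  ∑ d ∈ range (g.natDegree + 1),
    if d % (p + 1) = ρ then Polynomial.C (g.coeff d) * Polynomial.X ^ ((d - ρ) / (p + 1))
    else 0

/-- The node of the polynomial tree reached from root `f` along the
root-to-node digit path `w`. -/
noncomputable def nodePoly {F : Type*} [Field F] (p : ℕ) (f : Polynomial F)
    (w : List ℕ) : Polynomial F :=
  w.foldl (fun g ρ => splitChild p ρ g) f

/-- The `i`-th digit of `k` in radix `p+1`. -/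
def digitAt (p k i : ℕ) : ℕ := k / (p + 1) ^ i % (p + 1)

/-- The digit path `k_{H-1}, k_{H-2}, …, k_t` (from root to node). -/
def digitPath (p H t k : ℕ) : List ℕ :=
  (List.range (H - t)).map fun i => digitAt p k (H - 1 - i)

/-- `γ` at level `h` for the digit string with value `v`:
`γ_{k_{h-1}⋯k_0} = (β^v)^{(p+1)^{H-h}}` where `v = k_{h-1}(p+1)^{h-1} + ⋯ + k_0`. -/
noncomputable def gammaVal {F : Type*} [Field F] (β : F) (p H h v : ℕ) : F :=
  (β ^ v) ^ ((p + 1) ^ (H - h))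

/-- `Q(k,t) = f_{k_{H-1}⋯k_t}(γ_{k_{t-1}⋯k_0})`. -/
noncomputable def Qval {F : Type*} [Field F] (β : F) (p H : ℕ) (f : Polynomial F)
    (k t : ℕ) : F :=
  (nodePoly p f (digitPath p H t k)).eval (gammaVal β p H t (k % (p + 1) ^ t))

/-- `k_ρ^{(t)}`: the number with the same radix-`(p+1)` digits as `k`, except
that digit `t` is replaced by `ρ`. -/
def replaceDigit (p k t ρ : ℕ) : ℕ :=
  k / (p + 1) ^ (t + 1) * (p + 1) ^ (t + 1) + ρ * (p + 1) ^ t + k % (p + 1) ^ t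

/- ------------------- auxiliary lemmas ------------------- -/

lemma splitChild_eval {F : Type*} [Field F] (p : ℕ) (g : Polynomial F) (z : F) :
    ∑ ρ ∈ range (p + 1), z ^ ρ * (splitChild p ρ g).eval (z ^ (p + 1)) = g.eval z := by
  have h1 : ∀ ρ, (splitChild p ρ g).eval (z ^ (p + 1)) =
      ∑ d ∈ range (g.natDegree + 1),
        if d % (p + 1) = ρ then g.coeff d * (z ^ (p + 1)) ^ ((d - ρ) / (p + 1)) else 0 := by
    intro ρ
    simp [splitChild, eval_finset_sum, apply_ite (Polynomial.eval (z ^ (p+1)))]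
  simp only [h1, mul_sum]
  rw [Finset.sum_comm]
  rw [Polynomial.eval_eq_sum_range]
  refine Finset.sum_congr rfl fun d _ => ?_
  rw [Finset.sum_eq_single (d % (p + 1))]
  · rw [if_pos rfl, ← pow_mul]
    have h := Nat.div_add_mod d (p + 1)
    have h2 : d - d % (p + 1) = (p + 1) * (d / (p + 1)) := by omega
    rw [h2, Nat.mul_div_cancel_left _ (Nat.succ_pos p)]
    rw [mul_left_comm, ← pow_add]
    congr 2
    omega
  · intro b _ hb
    rw [if_neg (fun h => hb h.symm), mul_zero]
  · intro h
    exact absurd (Finset.mem_range.2 (Nat.mod_lt _ (Nat.succ_pos p))) h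

lemma nodePoly_append {F : Type*} [Field F] (p : ℕ) (f : Polynomial F)
    (w : List ℕ) (ρ : ℕ) :
    nodePoly p f (w ++ [ρ]) = splitChild p ρ (nodePoly p f w) := by
  simp [nodePoly]

lemma replaceDigit_eq (p k t ρ : ℕ) :
    replaceDigit p k t ρ =
      (k / (p + 1) ^ (t + 1) * (p + 1) + ρ) * (p + 1) ^ t + k % (p + 1) ^ t := by
  rw [replaceDigit, pow_succ]; ring

lemma replaceDigit_mod (p k t ρ : ℕ) :
    replaceDigit p k t ρ % (p + 1) ^ t = k % (p + 1) ^ t := by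
  rw [replaceDigit_eq, add_comm, Nat.add_mul_mod_self_right, Nat.mod_mod_of_dvd _ dvd_rfl]

lemma replaceDigit_div_pow (p k t ρ : ℕ) :
    replaceDigit p k t ρ / (p + 1) ^ t = k / (p + 1) ^ (t + 1) * (p + 1) + ρ := by
  rw [replaceDigit_eq, add_comm,
    Nat.add_mul_div_right _ _ (pow_pos (Nat.succ_pos p) t),
    Nat.div_eq_of_lt (Nat.mod_lt _ (pow_pos (Nat.succ_pos p) t)), zero_add]

lemma replaceDigit_digit_eq (p k t ρ : ℕ) (hρ : ρ < p + 1) :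
    digitAt p (replaceDigit p k t ρ) t = ρ := by
  rw [digitAt, replaceDigit_div_pow, add_comm, Nat.add_mul_mod_self_right, Nat.mod_eq_of_lt hρ]

lemma replaceDigit_div_succ (p k t ρ : ℕ) (hρ : ρ < p + 1) :
    replaceDigit p k t ρ / (p + 1) ^ (t + 1) = k / (p + 1) ^ (t + 1) := by
  conv_lhs => rw [pow_succ, ← Nat.div_div_eq_div_mul]
  rw [replaceDigit_div_pow, add_comm, Nat.add_mul_div_right _ _ (Nat.succ_pos p),
    Nat.div_eq_of_lt hρ, zero_add]

lemma replaceDigit_digit_high (p k t ρ i : ℕ) (hρ : ρ < p + 1) (hi : t + 1 ≤ i) :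
    digitAt p (replaceDigit p k t ρ) i = digitAt p k i := by
  rw [digitAt, digitAt]
  have h : (p + 1) ^ i = (p + 1) ^ (t + 1) * (p + 1) ^ (i - (t + 1)) := by
    rw [← pow_add]; congr 1; omega
  rw [h, ← Nat.div_div_eq_div_mul, ← Nat.div_div_eq_div_mul, replaceDigit_div_succ p k t ρ hρ]

lemma digitPath_replace (p H t k ρ : ℕ) (hρ : ρ < p + 1) (ht : t < H) :
    digitPath p H t (replaceDigit p k t ρ) = digitPath p H (t + 1) k ++ [ρ] := by
  have hH : H - t = (H - (t + 1)) + 1 := by omega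
  rw [digitPath, digitPath, hH, List.range_succ, List.map_append]
  congr 1
  · apply List.map_congr_left
    intro i hi
    rw [List.mem_range] at hi
    exact replaceDigit_digit_high p k t ρ _ hρ (by omega)
  · simp only [List.map_cons, List.map_nil]
    congr 1
    have : H - 1 - (H - (t + 1)) = t := by omega
    rw [this, replaceDigit_digit_eq p k t ρ hρ]

lemma gamma_step {F : Type*} [Field F] (β : F) (p H t k : ℕ) (ht : t < H)
    (hone : β ^ ((p + 1) ^ H) = 1) :
    gammaVal β p H (t + 1) (k % (p + 1) ^ (t + 1)) ^ (p + 1) =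
      gammaVal β p H t (k % (p + 1) ^ t) := by
  unfold gammaVal
  rw [← pow_mul]
  have e1 : (p + 1) ^ (H - (t + 1)) * (p + 1) = (p + 1) ^ (H - t) := by
    rw [← pow_succ]; congr 1; omega
  rw [e1]
  have hv : k % (p + 1) ^ (t + 1) =
      k % (p + 1) ^ t + (k / (p + 1) ^ t % (p + 1)) * (p + 1) ^ t := by
    rw [pow_succ, Nat.mod_mul]
    ring
  rw [hv, pow_add, mul_pow]
  have e2 : (p + 1) ^ t * (p + 1) ^ (H - t) = (p + 1) ^ H := by
    rw [← pow_add]; congr 1; omega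
  have hfac : (β ^ (k / (p + 1) ^ t % (p + 1) * (p + 1) ^ t)) ^ ((p + 1) ^ (H - t)) = 1 := by
    rw [← pow_mul, mul_assoc, e2, mul_comm, pow_mul, hone, one_pow]
  rw [hfac, mul_one]

/-- The radix-`(p+1)` FFT recursion: with `Q(k,t) = f_{k_{H-1}⋯k_t}(γ_{k_{t-1}⋯k_0})`,
one has `Q(k,t+1) = ∑_{ρ=0}^{p} (γ_{k_t⋯k_0})^ρ · Q(k_ρ^{(t)}, t)`. -/
theorem stmt11 {F : Type*} [Field F] (p H : ℕ) (hp : 1 ≤ p)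
    (β : F) (hβ : IsPrimitiveRoot β ((p + 1) ^ H))
    (x : ℕ → F) (f : Polynomial F)
    (hf : f = ∑ k ∈ range ((p + 1) ^ H), Polynomial.C (x k) * Polynomial.X ^ k)
    (k t : ℕ) (hk : k < (p + 1) ^ H) (ht : t < H) :
    Qval β p H f k (t + 1) =
      ∑ ρ ∈ range (p + 1),
        (gammaVal β p H (t + 1) (k % (p + 1) ^ (t + 1))) ^ ρ *
          Qval β p H f (replaceDigit p k t ρ) t := by
  set g := nodePoly p f (digitPath p H (t + 1) k) with hg
  set γ := gammaVal β p H (t + 1) (k % (p + 1) ^ (t + 1)) with hγ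
  have hsum : ∀ ρ ∈ range (p + 1),
      Qval β p H f (replaceDigit p k t ρ) t = (splitChild p ρ g).eval (γ ^ (p + 1)) := by
    intro ρ hρ
    rw [Finset.mem_range] at hρ
    rw [Qval, digitPath_replace p H t k ρ hρ ht, nodePoly_append, ← hg,
      replaceDigit_mod, ← gamma_step β p H t k ht hβ.pow_eq_one, ← hγ]
  rw [Finset.sum_congr rfl fun ρ hρ => by rw [hsum ρ hρ]]
  rw [Qval, ← hg, ← hγ, ← splitChild_eval p g γ]
end
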